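/- Let M > 0, r > 2 with conjugate r' < 2, and −M ≤ φ ≤ 0. For nonnegative f ∈ L¹(R³) ∩ L^r_{loc}(R; L¹(R²)), the quantity ρ_i⁻(φ) = ∫_{R³} f(ξ) |ξ₁|/√(ξ₁² + 2φ) · χ(ξ₁² + 2φ) dξ satisfies ρ_i⁻(φ) ≤ √2 ‖f‖_{L¹(R³)} + C_M ‖f‖_{L^r(−2√M, 2√M; L¹(R²))}, where C_M depends only on M and r. -/

import Mathlib

open Set Real MeasureTheory intervalIntegral

lemma aux_abs_rpow_ii {s : ℝ} (hs : -1 < -s) (a b : ℝ) :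
    IntervalIntegrable (fun u => |u| ^ (-s)) volume a b := by
  have H : ∀ c : ℝ, 0 ≤ c → IntervalIntegrable (fun u => |u| ^ (-s)) volume 0 c := by
    intro c hc
    have h := intervalIntegrable_rpow' (r := -s) hs (a := 0) (b := c)
    rw [intervalIntegrable_iff, uIoc_of_le hc] at h ⊢
    exact h.congr_fun (fun x hx => by rw [abs_of_nonneg hx.1.le]) measurableSet_Ioc
  have H' : ∀ c : ℝ, IntervalIntegrable (fun u => |u| ^ (-s)) volume 0 c := by
    intro c
    rcases le_or_gt 0 c with h | h
    · exact H c h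
    · have h2 := (IntervalIntegrable.iff_comp_neg (by simp)).1 (H (-c) (by linarith))
      have : ∀ x : ℝ, |(-x)| ^ (-s) = |x| ^ (-s) := fun x => by rw [abs_neg]
      simp only [this] at h2
      simpa using h2
  exact (H' a).symm.trans (H' b)

lemma aux_key_int {A s : ℝ} (hA : 0 < A) (hs0 : 0 < s) (hs1 : s < 1) {c : ℝ} (hc : |c| ≤ A) :
    (IntegrableOn (fun t => |t - c| ^ (-s)) (Ioc (-A) A) volume) ∧
      ∫ t in Ioc (-A) A, |t - c| ^ (-s) ≤ 2 * (2 * A) ^ (1 - s) / (1 - s) := by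
  have hs' : (-1:ℝ) < -s := by linarith
  have hAA : -A ≤ A := by linarith
  have habs := abs_le.1 hc
  constructor
  · have h := ((aux_abs_rpow_ii hs' (-A - c) (A - c)).comp_sub_right c)
    rw [intervalIntegrable_iff, uIoc_of_le (by linarith : -A - c + c ≤ A - c + c)] at h
    have he : -A - c + c = -A := by ring
    have he2 : A - c + c = A := by ring
    rw [he, he2] at h
    exact h
  · have step1 : ∫ t in Ioc (-A) A, |t - c| ^ (-s)
        = ∫ u in Ioc (-A - c) (A - c), |u| ^ (-s) := by
      rw [← intervalIntegral.integral_of_le hAA, ← intervalIntegral.integral_of_le (by linarith : -A - c ≤ A - c)]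
      exact intervalIntegral.integral_comp_sub_right (fun u => |u| ^ (-s)) c
    have hIbig : IntegrableOn (fun u => |u| ^ (-s)) (Ioc (-(2*A)) (2*A)) volume := by
      have h := aux_abs_rpow_ii hs' (-(2*A)) (2*A)
      rwa [intervalIntegrable_iff, uIoc_of_le (by linarith)] at h
    have step2 : ∫ u in Ioc (-A - c) (A - c), |u| ^ (-s)
        ≤ ∫ u in Ioc (-(2*A)) (2*A), |u| ^ (-s) := by
      apply setIntegral_mono_set hIbig
      · filter_upwards with x using Real.rpow_nonneg (abs_nonneg x) _
      · apply HasSubset.Subset.eventuallyLE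
        apply Ioc_subset_Ioc <;> linarith
    have step3 : ∫ u in Ioc (-(2*A)) (2*A), |u| ^ (-s) = 2 * (2 * A) ^ (1 - s) / (1 - s) := by
      rw [← intervalIntegral.integral_of_le (by linarith : -(2*A) ≤ 2*A)]
      have hsplit : ∫ u in (-(2*A))..(2*A), |u| ^ (-s)
          = (∫ u in (-(2*A))..(0:ℝ), |u| ^ (-s)) + ∫ u in (0:ℝ)..(2*A), |u| ^ (-s) :=
        (intervalIntegral.integral_add_adjacent_intervals (aux_abs_rpow_ii hs' _ _)
          (aux_abs_rpow_ii hs' _ _)).symm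
      have hneg : ∫ u in (-(2*A))..(0:ℝ), |u| ^ (-s) = ∫ u in (0:ℝ)..(2*A), |u| ^ (-s) := by
        have := intervalIntegral.integral_comp_neg (a := (0:ℝ)) (b := 2*A)
          (f := fun u => |u| ^ (-s))
        simp only [abs_neg] at this
        rw [this]
        norm_num
      have hpos : ∫ u in (0:ℝ)..(2*A), |u| ^ (-s) = (2*A) ^ (1 - s) / (1 - s) := by
        have hcg : ∫ u in (0:ℝ)..(2*A), |u| ^ (-s) = ∫ u in (0:ℝ)..(2*A), u ^ (-s) := by
          apply intervalIntegral.integral_congr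
          intro x hx
          rw [uIcc_of_le (by linarith)] at hx
          show |x| ^ (-s) = x ^ (-s)
          rw [abs_of_nonneg hx.1]
        rw [hcg, integral_rpow (Or.inl hs')]
        rw [Real.zero_rpow (by linarith : -s + 1 ≠ 0), show -s + 1 = 1 - s by ring]
        ring
      rw [hsplit, hneg, hpos]; ring
    calc _ = _ := step1
      _ ≤ _ := step2
      _ = _ := step3

set_option maxHeartbeats 2000000 in
theorem rho_minus_bound (M r : ℝ) (hM : 0 < M) (hr : 2 < r) :
    ∃ C > (0:ℝ), ∀ (f : ℝ × ℝ × ℝ → ℝ) (φ : ℝ),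
      Integrable f → (∀ ξ, 0 ≤ f ξ) →
      (∀ a b : ℝ, IntervalIntegrable
          (fun ξ₁ => (∫ ξ' : ℝ × ℝ, f (ξ₁, ξ')) ^ r) volume a b) →
      -M ≤ φ → φ ≤ 0 →
      (∫ ξ : ℝ × ℝ × ℝ,
          f ξ * (|ξ.1| / Real.sqrt (ξ.1 ^ 2 + 2 * φ)) *
            (if 0 < ξ.1 ^ 2 + 2 * φ then (1:ℝ) else 0))
        ≤ Real.sqrt 2 * (∫ ξ : ℝ × ℝ × ℝ, |f ξ|) +
            C * (∫ ξ₁ in (-(2 * Real.sqrt M))..(2 * Real.sqrt M),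
                  (∫ ξ' : ℝ × ℝ, f (ξ₁, ξ')) ^ r) ^ (1 / r) := by
  have hr1 : (1:ℝ) < r := by linarith
  have hrm : (0:ℝ) < r - 1 := by linarith
  set p := r / (r - 1) with hpdef
  have hp1 : 1 < p := by rw [hpdef, lt_div_iff₀ hrm]; linarith
  have hp2 : p < 2 := by rw [hpdef, div_lt_iff₀ hrm]; linarith
  have hpq : p.HolderConjugate r := (Real.HolderConjugate.conjExponent hr1).symm
  set A := 2 * Real.sqrt M with hAdef
  have hA : 0 < A := by rw [hAdef]; positivity
  set s := p / 2 with hsdef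
  have hs0 : 0 < s := by rw [hsdef]; linarith
  have hs1 : s < 1 := by rw [hsdef]; linarith
  set B0 := 2 * (2 * A) ^ (1 - s) / (1 - s) with hB0def
  have hB0 : 0 ≤ B0 := by
    rw [hB0def]
    have : (0:ℝ) ≤ (2 * A) ^ (1 - s) := Real.rpow_nonneg (by linarith) _
    have h1s : 0 < 1 - s := by linarith
    positivity
  set K := A ^ s * (B0 + B0) with hKdef
  have hKnn : 0 ≤ K := by
    rw [hKdef]
    have : (0:ℝ) ≤ A ^ s := Real.rpow_nonneg hA.le _
    positivity
  have hC0 : 0 ≤ K ^ (1 / p) := Real.rpow_nonneg hKnn _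
  refine ⟨K ^ (1 / p) + 1, by linarith, ?_⟩
  intro f φ hf hf0 hFr hφ1 hφ2
  set F : ℝ → ℝ := fun t => ∫ ξ' : ℝ × ℝ, f (t, ξ') with hFdef
  have hFg : ∀ t : ℝ, (∫ ξ' : ℝ × ℝ, f (t, ξ')) = F t := fun t => by rw [hFdef]
  simp only [hFg] at hFr ⊢
  have hF0 : ∀ t, 0 ≤ F t := fun t => by
    rw [hFdef]; exact integral_nonneg fun ξ' => hf0 _
  set w : ℝ → ℝ := fun t =>
    (|t| / Real.sqrt (t ^ 2 + 2 * φ)) * (if 0 < t ^ 2 + 2 * φ then (1:ℝ) else 0) with hwdef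
  have hw0 : ∀ t, 0 ≤ w t := by
    intro t
    rw [hwdef]
    apply mul_nonneg (div_nonneg (abs_nonneg _) (Real.sqrt_nonneg _))
    split <;> norm_num
  have hwmeas : Measurable w := by
    rw [hwdef]
    apply Measurable.mul
    · exact measurable_id.abs.div ((measurable_id.pow_const 2).add_const (2 * φ)).sqrt
    · exact Measurable.ite
        (measurableSet_lt measurable_const ((measurable_id.pow_const 2).add_const (2 * φ)))
        measurable_const measurable_const
  have hgoal1 : ∀ ξ : ℝ × ℝ × ℝ,
      f ξ * (|ξ.1| / Real.sqrt (ξ.1 ^ 2 + 2 * φ)) *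
        (if 0 < ξ.1 ^ 2 + 2 * φ then (1:ℝ) else 0) = f ξ * w ξ.1 := fun ξ => by
    simp only [hwdef]; ring
  simp only [hgoal1]
  set X := ∫ ξ₁ in (-A)..A, F ξ₁ ^ r with hXdef
  have hX0 : 0 ≤ X := by
    rw [hXdef]
    exact intervalIntegral.integral_nonneg (by linarith)
      (fun x _ => Real.rpow_nonneg (hF0 x) r)
  have hX0' : 0 ≤ X ^ (1 / r) := Real.rpow_nonneg hX0 _
  have habs0 : 0 ≤ ∫ ξ : ℝ × ℝ × ℝ, |f ξ| := integral_nonneg fun _ => abs_nonneg _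
  by_cases hInt : Integrable (fun ξ : ℝ × ℝ × ℝ => f ξ * w ξ.1)
  swap
  · rw [integral_undef hInt]
    have h2 : 0 ≤ Real.sqrt 2 * ∫ ξ : ℝ × ℝ × ℝ, |f ξ| :=
      mul_nonneg (Real.sqrt_nonneg 2) habs0
    have h3 : 0 ≤ (K ^ (1 / p) + 1) * X ^ (1 / r) := mul_nonneg (by linarith) hX0'
    linarith
  -- main case
  set indS : ℝ → ℝ := fun t => if t ∈ Ioc (-A) A then (1:ℝ) else 0 with hinddef
  have hindmeas : Measurable indS := by
    rw [hinddef]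
    exact Measurable.ite measurableSet_Ioc measurable_const measurable_const
  have hindbdd : ∀ t, ‖indS t‖ ≤ 1 := by
    intro t; rw [hinddef]; dsimp only; split <;> simp
  have hInt2 : Integrable (fun ξ : ℝ × ℝ × ℝ => indS ξ.1 * (f ξ * w ξ.1)) := by
    apply hInt.bdd_mul ((hindmeas.comp measurable_fst).aestronglyMeasurable)
    exact Filter.Eventually.of_forall fun ξ => hindbdd ξ.1
  have hInt1 : Integrable (fun ξ : ℝ × ℝ × ℝ => (1 - indS ξ.1) * (f ξ * w ξ.1)) := by
    apply hInt.bdd_mul (c := 2)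
      (((measurable_const.sub hindmeas).comp measurable_fst).aestronglyMeasurable)
    refine Filter.Eventually.of_forall fun ξ => ?_
    have := hindbdd ξ.1
    calc ‖1 - indS ξ.1‖ ≤ ‖(1:ℝ)‖ + ‖indS ξ.1‖ := norm_sub_le _ _
      _ ≤ 2 := by rw [norm_one]; linarith
  have hsplit : ∫ ξ : ℝ × ℝ × ℝ, f ξ * w ξ.1
      = (∫ ξ : ℝ × ℝ × ℝ, (1 - indS ξ.1) * (f ξ * w ξ.1))
        + ∫ ξ : ℝ × ℝ × ℝ, indS ξ.1 * (f ξ * w ξ.1) := by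
    rw [← integral_add hInt1 hInt2]
    congr 1; funext ξ; ring
  -- bound outside the slab
  have hw2 : ∀ t, t ∉ Ioc (-A) A → w t ≤ Real.sqrt 2 := by
    intro t ht
    have hAt : A ≤ |t| := by
      rw [Set.mem_Ioc, not_and_or, not_lt, not_le] at ht
      rcases ht with h | h
      · rw [abs_of_nonpos (by linarith)]; linarith
      · rw [abs_of_pos (by linarith)]; linarith
    have hA2 : A ^ 2 = 4 * M := by
      rw [hAdef, mul_pow, Real.sq_sqrt hM.le]; norm_num
    have ht2 : 4 * M ≤ t ^ 2 := by
      have h := pow_le_pow_left₀ hA.le hAt 2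
      rw [sq_abs] at h; linarith
    have hD2 : t ^ 2 / 2 ≤ t ^ 2 + 2 * φ := by linarith
    have hDpos : 0 < t ^ 2 + 2 * φ := by nlinarith
    rw [hwdef]; dsimp only; rw [if_pos hDpos, mul_one]
    rw [div_le_iff₀ (Real.sqrt_pos.2 hDpos), ← Real.sqrt_mul (by norm_num : (0:ℝ) ≤ 2)]
    rw [show |t| = Real.sqrt (t ^ 2) by rw [Real.sqrt_sq_eq_abs]]
    apply Real.sqrt_le_sqrt; linarith
  have hb1 : (∫ ξ : ℝ × ℝ × ℝ, (1 - indS ξ.1) * (f ξ * w ξ.1))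
      ≤ Real.sqrt 2 * ∫ ξ : ℝ × ℝ × ℝ, |f ξ| := by
    rw [← MeasureTheory.integral_const_mul]
    apply integral_mono hInt1 (hf.abs.const_mul _)
    intro ξ
    dsimp only
    by_cases hm : ξ.1 ∈ Ioc (-A) A
    · rw [hinddef]; dsimp only; rw [if_pos hm]
      have : (0:ℝ) ≤ Real.sqrt 2 * |f ξ| := mul_nonneg (Real.sqrt_nonneg 2) (abs_nonneg _)
      simpa using this
    · rw [hinddef]; dsimp only; rw [if_neg hm, sub_zero, one_mul, abs_of_nonneg (hf0 ξ),
        mul_comm (Real.sqrt 2) (f ξ)]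
      exact mul_le_mul_of_nonneg_left (hw2 _ hm) (hf0 ξ)
  -- the slab part
  set a := Real.sqrt (2 * (-φ)) with hadef
  have ha0 : 0 ≤ a := Real.sqrt_nonneg _
  have ha2 : a ^ 2 = 2 * (-φ) := Real.sq_sqrt (by linarith)
  have haA : a ≤ A := by
    rw [hadef, hAdef]
    rw [show 2 * Real.sqrt M = Real.sqrt (4 * M) by
      rw [show (4:ℝ) * M = 2 ^ 2 * M by norm_num, Real.sqrt_mul (by positivity) M,
        Real.sqrt_sq (by norm_num : (0:ℝ) ≤ 2)]]
    exact Real.sqrt_le_sqrt (by linarith)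
  set g : ℝ → ℝ := fun t => A ^ s * (|t - a| ^ (-s) + |t + a| ^ (-s)) with hgdef
  have hg0 : ∀ t, 0 ≤ g t := by
    intro t; rw [hgdef]
    have h1 : (0:ℝ) ≤ |t - a| ^ (-s) := Real.rpow_nonneg (abs_nonneg _) _
    have h2 : (0:ℝ) ≤ |t + a| ^ (-s) := Real.rpow_nonneg (abs_nonneg _) _
    have h3 : (0:ℝ) ≤ A ^ s := Real.rpow_nonneg hA.le _
    positivity
  have hkey1 := aux_key_int hA hs0 hs1 (c := a) (by rwa [abs_of_nonneg ha0])
  have hkey2 := aux_key_int hA hs0 hs1 (c := -a) (by rwa [abs_neg, abs_of_nonneg ha0])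
  have hplus : ∀ t : ℝ, |t - -a| = |t + a| := fun t => by rw [sub_neg_eq_add]
  have hkey2' : IntegrableOn (fun t => |t + a| ^ (-s)) (Ioc (-A) A) volume ∧
      ∫ t in Ioc (-A) A, |t + a| ^ (-s) ≤ B0 := by
    have h := hkey2
    simp only [hplus] at h
    rw [hB0def]
    exact h
  have hgint : IntegrableOn g (Ioc (-A) A) volume := by
    rw [hgdef]
    exact (hkey1.1.add hkey2'.1).const_mul _
  have hgbound : ∫ t in Ioc (-A) A, g t ≤ K := by
    rw [hgdef, hKdef]
    rw [MeasureTheory.integral_const_mul]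
    apply mul_le_mul_of_nonneg_left _ (Real.rpow_nonneg hA.le _)
    rw [integral_add hkey1.1 hkey2'.1]
    have h1 := hkey1.2
    rw [← hB0def] at h1
    linarith [hkey2'.2]
  -- pointwise bound on the slab
  have hptw : ∀ t ∈ Ioc (-A) A, w t ^ p ≤ g t := by
    intro t ht
    rcases le_or_gt (t ^ 2 + 2 * φ) 0 with hD | hD
    · rw [hwdef]; dsimp only; rw [if_neg (not_lt.2 hD), mul_zero,
        Real.zero_rpow (by linarith : p ≠ 0)]
      exact hg0 t
    · have htA : |t| ≤ A := abs_le.2 ⟨ht.1.le, ht.2⟩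
      have hta : a < |t| := by
        have h2 : a ^ 2 < t ^ 2 := by rw [ha2]; linarith
        have h3 : a ^ 2 < |t| ^ 2 := by rwa [sq_abs]
        exact lt_of_pow_lt_pow_left₀ 2 (abs_nonneg t) h3
      have hwt : w t = |t| / Real.sqrt (t ^ 2 + 2 * φ) := by
        rw [hwdef]; dsimp only; rw [if_pos hD, mul_one]
      have hsq : w t ^ (2:ℕ) ≤ A / (|t| - a) := by
        rw [hwt, div_pow, Real.sq_sqrt hD.le, sq_abs]
        rw [div_le_div_iff₀ hD (by linarith : (0:ℝ) < |t| - a)]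
        have hD' : t ^ 2 + 2 * φ = (|t| - a) * (|t| + a) := by
          have h5 : (|t| - a) * (|t| + a) = |t| ^ 2 - a ^ 2 := by ring
          rw [h5, sq_abs, ha2]; ring
        have hkey : t ^ 2 ≤ A * (|t| + a) := by
          have h6 : t ^ 2 = |t| * |t| := by rw [← sq_abs]; ring
          nlinarith [abs_nonneg t]
        rw [hD']
        nlinarith [hta, ha0, hkey, abs_nonneg t]
      have h2s : w t ^ p = (w t ^ (2:ℕ)) ^ s := by
        rw [← Real.rpow_natCast (w t) 2, ← Real.rpow_mul (hw0 t)]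
        norm_num
        rw [show (2:ℝ) * s = p by rw [hsdef]; ring]
      rw [h2s]
      have h3 : (w t ^ (2:ℕ)) ^ s ≤ (A / (|t| - a)) ^ s :=
        Real.rpow_le_rpow (by positivity) hsq hs0.le
      have h4 : (A / (|t| - a)) ^ s = A ^ s * (|t| - a) ^ (-s) := by
        rw [Real.div_rpow hA.le (by linarith : (0:ℝ) ≤ |t| - a),
          Real.rpow_neg (by linarith : (0:ℝ) ≤ |t| - a), div_eq_mul_inv]
      have hAs : (0:ℝ) ≤ A ^ s := Real.rpow_nonneg hA.le _
      rcases le_or_gt 0 t with htp | htn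
      · have he : |t| - a = |t - a| := by
          rw [abs_of_nonneg htp, abs_of_nonneg (by rw [abs_of_nonneg htp] at hta; linarith)]
        have hY : (0:ℝ) ≤ |t + a| ^ (-s) := Real.rpow_nonneg (abs_nonneg _) _
        rw [hgdef]; dsimp only
        calc (w t ^ (2:ℕ)) ^ s ≤ A ^ s * (|t| - a) ^ (-s) := by rw [← h4]; exact h3
          _ = A ^ s * |t - a| ^ (-s) := by rw [he]
          _ ≤ A ^ s * (|t - a| ^ (-s) + |t + a| ^ (-s)) := by nlinarith [mul_nonneg hAs hY]
      · have he : |t| - a = |t + a| := by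
          rw [abs_of_neg htn] at hta ⊢
          rw [abs_of_neg (by linarith : t + a < 0)]
          ring
        have hY : (0:ℝ) ≤ |t - a| ^ (-s) := Real.rpow_nonneg (abs_nonneg _) _
        rw [hgdef]; dsimp only
        calc (w t ^ (2:ℕ)) ^ s ≤ A ^ s * (|t| - a) ^ (-s) := by rw [← h4]; exact h3
          _ = A ^ s * |t + a| ^ (-s) := by rw [he]
          _ ≤ A ^ s * (|t - a| ^ (-s) + |t + a| ^ (-s)) := by nlinarith [mul_nonneg hAs hY]
  -- integrability of w ^ p on the slab
  have hwrpmeas : Measurable (fun t => w t ^ p) := (hwmeas.pow measurable_const)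
  have hwrp_int : IntegrableOn (fun t => w t ^ p) (Ioc (-A) A) volume := by
    apply Integrable.mono' hgint hwrpmeas.aestronglyMeasurable
    rw [ae_restrict_iff' measurableSet_Ioc]
    filter_upwards with t ht
    rw [Real.norm_eq_abs, abs_of_nonneg (Real.rpow_nonneg (hw0 t) _)]
    exact hptw t ht
  -- Memℒp facts
  have hp0' : (0:ℝ) < p := by linarith
  have hofp0 : ENNReal.ofReal p ≠ 0 := by
    simp only [ne_eq, ENNReal.ofReal_eq_zero, not_le]; linarith
  have hofptop : ENNReal.ofReal p ≠ ⊤ := ENNReal.ofReal_ne_top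
  have hofr0 : ENNReal.ofReal r ≠ 0 := by
    simp only [ne_eq, ENNReal.ofReal_eq_zero, not_le]; linarith
  have hofrtop : ENNReal.ofReal r ≠ ⊤ := ENNReal.ofReal_ne_top
  have hμ := (volume : Measure ℝ).restrict (Ioc (-A) A)
  have hWmem : MemLp w (ENNReal.ofReal p) ((volume : Measure ℝ).restrict (Ioc (-A) A)) := by
    apply (memLp_norm_rpow_iff (q := ENNReal.ofReal p)
      hwmeas.aestronglyMeasurable.restrict hofp0 hofptop).1
    rw [ENNReal.div_self hofp0 hofptop, ENNReal.toReal_ofReal hp0'.le,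
      memLp_one_iff_integrable]
    apply hwrp_int.congr
    filter_upwards with t
    rw [Real.norm_eq_abs, abs_of_nonneg (hw0 t)]
  have hFAESM : AEStronglyMeasurable F volume := by
    have hfae : AEStronglyMeasurable f
        ((volume : Measure ℝ).prod (volume : Measure (ℝ × ℝ))) := by
      rw [← Measure.volume_eq_prod]; exact hf.1
    rw [hFdef]
    exact hfae.integral_prod_right'
  have hFrint : IntegrableOn (fun t => F t ^ r) (Ioc (-A) A) volume := by
    have h := hFr (-A) A
    rwa [intervalIntegrable_iff, uIoc_of_le (by linarith : -A ≤ A)] at h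
  have hFmem : MemLp F (ENNReal.ofReal r) ((volume : Measure ℝ).restrict (Ioc (-A) A)) := by
    apply (memLp_norm_rpow_iff (q := ENNReal.ofReal r)
      hFAESM.restrict hofr0 hofrtop).1
    rw [ENNReal.div_self hofr0 hofrtop, ENNReal.toReal_ofReal (by linarith : (0:ℝ) ≤ r),
      memLp_one_iff_integrable]
    apply hFrint.congr
    filter_upwards with t
    rw [Real.norm_eq_abs, abs_of_nonneg (hF0 t)]
  -- Hölder
  have hHold := integral_mul_le_Lp_mul_Lq_of_nonneg hpq
    (Filter.Eventually.of_forall hw0) (Filter.Eventually.of_forall hF0) hWmem hFmem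
  -- Fubini
  have hInt2' : Integrable (fun ξ : ℝ × ℝ × ℝ => indS ξ.1 * (f ξ * w ξ.1))
      ((volume : Measure ℝ).prod (volume : Measure (ℝ × ℝ))) := by
    rw [← Measure.volume_eq_prod]; exact hInt2
  have hFub : (∫ ξ : ℝ × ℝ × ℝ, indS ξ.1 * (f ξ * w ξ.1))
      = ∫ t : ℝ, indS t * (w t * F t) := by
    rw [Measure.volume_eq_prod, integral_prod _ hInt2']
    congr 1
    funext t
    have : (fun ξ' : ℝ × ℝ => indS (t, ξ').1 * (f (t, ξ') * w (t, ξ').1))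
        = fun ξ' : ℝ × ℝ => (indS t * w t) * f (t, ξ') := by
      funext ξ'; dsimp only; ring
    rw [this, MeasureTheory.integral_const_mul, hFg]
    ring
  have hind2 : (∫ t : ℝ, indS t * (w t * F t)) = ∫ t in Ioc (-A) A, w t * F t := by
    rw [← MeasureTheory.integral_indicator measurableSet_Ioc]
    congr 1
    funext t
    rw [Set.indicator_apply, hinddef]
    dsimp only
    split <;> simp
  have hXr : (∫ t in Ioc (-A) A, F t ^ r) = X := by
    rw [hXdef, intervalIntegral.integral_of_le (by linarith : -A ≤ A)]
  have hfac1 : (∫ t in Ioc (-A) A, w t ^ p) ^ (1 / p) ≤ K ^ (1 / p) := by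
    apply Real.rpow_le_rpow
      (integral_nonneg fun t => Real.rpow_nonneg (hw0 t) _)
      (le_trans (setIntegral_mono_on hwrp_int hgint measurableSet_Ioc hptw) hgbound)
      (by positivity)
  have hb2 : (∫ ξ : ℝ × ℝ × ℝ, indS ξ.1 * (f ξ * w ξ.1)) ≤ (K ^ (1 / p) + 1) * X ^ (1 / r) := by
    rw [hFub, hind2]
    calc (∫ t in Ioc (-A) A, w t * F t)
        ≤ (∫ t in Ioc (-A) A, w t ^ p) ^ (1 / p) * (∫ t in Ioc (-A) A, F t ^ r) ^ (1 / r) :=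
          hHold
      _ = (∫ t in Ioc (-A) A, w t ^ p) ^ (1 / p) * X ^ (1 / r) := by rw [hXr]
      _ ≤ K ^ (1 / p) * X ^ (1 / r) := mul_le_mul_of_nonneg_right hfac1 hX0'
      _ ≤ (K ^ (1 / p) + 1) * X ^ (1 / r) := mul_le_mul_of_nonneg_right (by linarith) hX0'
  linarith [hsplit, hb1, hb2]
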